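/- arXiv:2206.03295 — 2 statements merged into one kernel-verified Lean document; each statement's English description precedes it below -/
import Mathlib

section
/- Let m ≥ 5 and let v₁,…,v_{m+3} be pairwise orthogonal roots of the lattice D_{2m}. Let M be the ℤ-span of v₁,…,v_{m+3} and let M' be the primitive closure of M in D_{2m}. Then there exists a subgroup H of the quotient group M'/M of order 4 such that every nonzero element of H is the class of a root of D_{2m} lying in M'. -/
/-- The lattice `Dₙ`: the subgroup `{x ∈ ℤⁿ : x₁ + ⋯ + xₙ is even}` of `ℤⁿ`,
equipped (implicitly) with the standard Euclidean bilinear form `⟨x,y⟩ = ∑ xᵢyᵢ`. -/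
def DLat (n : ℕ) : AddSubgroup (Fin n → ℤ) where
  carrier := {x | Even (∑ i, x i)}
  zero_mem' := by simp
  add_mem' := by
    intro a b ha hb
    simpa [Finset.sum_add_distrib] using ha.add hb
  neg_mem' := by
    intro a ha
    simpa using ha.neg

/-- The primitive closure of a subgroup `M` inside the lattice `Dₙ`:
`M' = {x ∈ Dₙ : kx ∈ M for some nonzero integer k}`. -/
def primClosure (n : ℕ) (M : AddSubgroup (Fin n → ℤ)) : AddSubgroup (Fin n → ℤ) where
  carrier := {x | x ∈ DLat n ∧ ∃ k : ℤ, k ≠ 0 ∧ k • x ∈ M}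
  zero_mem' := ⟨(DLat n).zero_mem, 1, one_ne_zero, by simpa using M.zero_mem⟩
  add_mem' := by
    rintro a b ⟨haD, k, hk, hka⟩ ⟨hbD, l, hl, hlb⟩
    refine ⟨(DLat n).add_mem haD hbD, k * l, mul_ne_zero hk hl, ?_⟩
    have h1 : (k * l) • (a + b) = l • (k • a) + k • (l • b) := by
      rw [smul_add, smul_smul, smul_smul, mul_comm l k]
    rw [h1]
    exact M.add_mem (M.zsmul_mem hka l) (M.zsmul_mem hlb k)
  neg_mem' := by
    rintro a ⟨haD, k, hk, hka⟩
    exact ⟨(DLat n).neg_mem haD, k, hk, by simpa [smul_neg] using M.neg_mem hka⟩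

section AuxLemmas

lemma aux_norm2 {n : ℕ} (x : Fin n → ℤ) (hx : ∑ i, x i * x i = 2) :
    ∃ a b : Fin n, a ≠ b ∧ (x a = 1 ∨ x a = -1) ∧ (x b = 1 ∨ x b = -1) ∧
      ∀ t, t ≠ a → t ≠ b → x t = 0 := by
  have hble : ∀ i : Fin n, x i * x i ≤ 2 := by
    intro i
    calc x i * x i ≤ ∑ j, x j * x j :=
      Finset.single_le_sum (fun j _ => mul_self_nonneg (x j)) (Finset.mem_univ i)
    _ = 2 := hx
  have hsmall : ∀ i : Fin n, x i = -1 ∨ x i = 0 ∨ x i = 1 := by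
    intro i
    have h := hble i
    have h1 : x i ≤ 1 := by nlinarith
    have h2 : -1 ≤ x i := by nlinarith
    omega
  set S := Finset.univ.filter (fun i => x i ≠ 0) with hS
  have hsum : ∑ i ∈ S, x i * x i = 2 := by
    rw [← hx]
    exact Finset.sum_subset (Finset.subset_univ S) (by
      intro i _ hiS
      simp [hS] at hiS
      simp [hiS])
  have hone : ∀ i ∈ S, x i * x i = 1 := by
    intro i hi
    simp [hS] at hi
    rcases hsmall i with h | h | h <;> simp [h] at hi ⊢
  have hcard : S.card = 2 := by
    have : ∑ i ∈ S, x i * x i = S.card • 1 := Finset.sum_eq_card_nsmul hone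
    simp [this] at hsum
    omega
  rw [Finset.card_eq_two] at hcard
  obtain ⟨a, b, hab, hSab⟩ := hcard
  have ha : x a ≠ 0 := by
    have : a ∈ S := by rw [hSab]; simp
    simpa [hS] using this
  have hb : x b ≠ 0 := by
    have : b ∈ S := by rw [hSab]; simp
    simpa [hS] using this
  refine ⟨a, b, hab, ?_, ?_, ?_⟩
  · rcases hsmall a with h | h | h <;> simp_all
  · rcases hsmall b with h | h | h <;> simp_all
  · intro t hta htb
    by_contra ht
    have : t ∈ S := by simp [hS, ht]
    rw [hSab] at this
    simp at this
    tauto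

lemma aux_sum_support {n : ℕ} (x y : Fin n → ℤ) (a b : Fin n) (hab : a ≠ b)
    (hx0 : ∀ t, t ≠ a → t ≠ b → x t = 0) :
    ∑ i, x i * y i = x a * y a + x b * y b := by
  have h1 : ∑ i ∈ ({a, b} : Finset (Fin n)), x i * y i = x a * y a + x b * y b :=
    Finset.sum_pair hab
  rw [← h1]
  exact (Finset.sum_subset (Finset.subset_univ _) (by
    intro i _ hi
    simp at hi
    rw [hx0 i hi.1 hi.2, zero_mul])).symm

lemma aux_sign6 (p1 q1 p2 q2 p3 q3 : ℤ)
    (h1 : p1 = 1 ∨ p1 = -1) (h2 : q1 = 1 ∨ q1 = -1) (h3 : p2 = 1 ∨ p2 = -1)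
    (h4 : q2 = 1 ∨ q2 = -1) (h5 : p3 = 1 ∨ p3 = -1) (h6 : q3 = 1 ∨ q3 = -1)
    (e12 : p1 * p2 + q1 * q2 = 0) (e13 : p1 * p3 + q1 * q3 = 0)
    (e23 : p2 * p3 + q2 * q3 = 0) : False := by
  rcases h1 with rfl | rfl <;> rcases h2 with rfl | rfl <;> rcases h3 with rfl | rfl <;>
    rcases h4 with rfl | rfl <;> rcases h5 with rfl | rfl <;> rcases h6 with rfl | rfl <;>
    omega

lemma aux_sign4 (p1 q1 p2 q2 : ℤ)
    (h1 : p1 = 1 ∨ p1 = -1) (h2 : q1 = 1 ∨ q1 = -1) (h3 : p2 = 1 ∨ p2 = -1)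
    (h4 : q2 = 1 ∨ q2 = -1) (e : p1 * p2 + q1 * q2 = 0) :
    p1 * q1 + p2 * q2 = 0 := by
  rcases h1 with rfl | rfl <;> rcases h2 with rfl | rfl <;> rcases h3 with rfl | rfl <;>
    rcases h4 with rfl | rfl <;> omega

lemma aux_sq2 (p q : ℤ) (h1 : p = 1 ∨ p = -1) (h2 : q = 1 ∨ q = -1) :
    p * p + q * q = 2 := by
  rcases h1 with rfl | rfl <;> rcases h2 with rfl | rfl <;> omega

lemma aux_even (p q : ℤ) (h1 : p = 1 ∨ p = -1) (h2 : q = 1 ∨ q = -1) : Even (p + q) := by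
  rcases h1 with rfl | rfl <;> rcases h2 with rfl | rfl <;> decide

lemma aux_phi {n : ℕ} (C D : Fin n) :
    ∃ φ : (Fin n → ℤ) →+ ZMod 2, ∀ x : Fin n → ℤ, φ x = ((x C + x D : ℤ) : ZMod 2) :=
  ⟨AddMonoidHom.mk' (fun x => ((x C + x D : ℤ) : ZMod 2)) (by
    intro x y
    simp only [Pi.add_apply]
    push_cast
    ring), fun x => rfl⟩

lemma aux_klein {G : Type*} [AddCommGroup G] (qa qb qc : G)
    (raa : qa + qa = 0) (rbb : qb + qb = 0) (rab : qa + qb = qc)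
    (h0a : qa ≠ 0) (h0b : qb ≠ 0) (h0c : qc ≠ 0)
    (hab : qa ≠ qb) (hac : qa ≠ qc) (hbc : qb ≠ qc) :
    ∃ H : AddSubgroup G, (H : Set G) = {0, qa, qb, qc} ∧ Nat.card H = 4 := by
  have rcc : qc + qc = 0 := by
    rw [← rab]
    calc qa + qb + (qa + qb) = (qa + qa) + (qb + qb) := by abel
    _ = 0 := by rw [raa, rbb, add_zero]
  have rac : qa + qc = qb := by
    rw [← rab]
    calc qa + (qa + qb) = (qa + qa) + qb := by abel
    _ = qb := by rw [raa, zero_add]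
  have rbc : qb + qc = qa := by
    rw [← rab]
    calc qb + (qa + qb) = (qb + qb) + qa := by abel
    _ = qa := by rw [rbb, zero_add]
  have rba : qb + qa = qc := by rw [add_comm]; exact rab
  have rca : qc + qa = qb := by rw [add_comm]; exact rac
  have rcb : qc + qb = qa := by rw [add_comm]; exact rbc
  have na : -qa = qa := by rw [neg_eq_iff_add_eq_zero]; exact raa
  have nb : -qb = qb := by rw [neg_eq_iff_add_eq_zero]; exact rbb
  have nc : -qc = qc := by rw [neg_eq_iff_add_eq_zero]; exact rcc
  refine ⟨{ carrier := {0, qa, qb, qc}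
            zero_mem' := by simp
            add_mem' := ?_
            neg_mem' := ?_ }, rfl, ?_⟩
  · intro x y hx hy
    simp only [Set.mem_insert_iff, Set.mem_singleton_iff] at hx hy ⊢
    rcases hx with rfl | rfl | rfl | rfl <;> rcases hy with rfl | rfl | rfl | rfl <;>
      simp [raa, rbb, rcc, rab, rac, rbc, rba, rca, rcb]
  · intro x hx
    simp only [Set.mem_insert_iff, Set.mem_singleton_iff] at hx ⊢
    rcases hx with rfl | rfl | rfl | rfl <;> simp [na, nb, nc]
  · have h := Nat.card_coe_set_eq ({0, qa, qb, qc} : Set G)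
    show Nat.card ({0, qa, qb, qc} : Set G) = 4
    rw [h]
    rw [Set.ncard_insert_of_notMem (by simp [Ne.symm h0a, Ne.symm h0b, Ne.symm h0c]),
      Set.ncard_insert_of_notMem (by simp [hab, hac]),
      Set.ncard_insert_of_notMem (by simp [hbc]), Set.ncard_singleton]

end AuxLemmas

/-- Let `m ≥ 5` and let `v₁,…,v_{m+3}` be pairwise orthogonal roots of the lattice `D_{2m}`.
Let `M` be the `ℤ`-span of `v₁,…,v_{m+3}` and let `M'` be the primitive closure of `M` in
`D_{2m}`.  Then there exists a subgroup `H` of the quotient group `M'/M` of order 4 such that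
every nonzero element of `H` is the class of a root of `D_{2m}` lying in `M'`. -/
theorem roots_in_primitive_closure_D_even (m : ℕ) (hm : 5 ≤ m)
    (v : Fin (m + 3) → (Fin (2 * m) → ℤ))
    (hmem : ∀ k, v k ∈ DLat (2 * m))
    (hroot : ∀ k, ∑ i, v k i * v k i = 2)
    (horth : ∀ k l, k ≠ l → ∑ i, v k i * v l i = 0) :
    ∃ H : AddSubgroup
        ((primClosure (2 * m) (AddSubgroup.closure (Set.range v))) ⧸
          (AddSubgroup.closure (Set.range v)).addSubgroupOf
            (primClosure (2 * m) (AddSubgroup.closure (Set.range v)))),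
      Nat.card H = 4 ∧
      ∀ h ∈ H, h ≠ 0 →
        ∃ (w : Fin (2 * m) → ℤ)
          (hw : w ∈ primClosure (2 * m) (AddSubgroup.closure (Set.range v))),
          w ∈ DLat (2 * m) ∧ (∑ i, w i * w i = 2) ∧
            QuotientAddGroup.mk (⟨w, hw⟩ :
              primClosure (2 * m) (AddSubgroup.closure (Set.range v))) = h := by
  classical
  set M := AddSubgroup.closure (Set.range v) with hMdef
  choose A B hAB hvA hvB hvz using fun k => aux_norm2 (v k) (hroot k)
  have hvM : ∀ k, v k ∈ M := fun k => AddSubgroup.subset_closure ⟨k, rfl⟩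
  have hip : ∀ k l : Fin (m+3), k ≠ l →
      v k (A k) * v l (A k) + v k (B k) * v l (B k) = 0 := by
    intro k l hkl
    rw [← aux_sum_support (v k) (v l) (A k) (B k) (hAB k) (hvz k)]
    exact horth k l hkl
  -- supports equal or disjoint
  have hsup : ∀ k l : Fin (m+3), k ≠ l →
      ({A k, B k} : Finset (Fin (2*m))) = {A l, B l} ∨
      Disjoint ({A k, B k} : Finset (Fin (2*m))) {A l, B l} := by
    intro k l hkl
    by_cases h1 : A k = A l ∨ A k = B l
    · by_cases h2 : B k = A l ∨ B k = B l
      · left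
        apply Finset.eq_of_subset_of_card_le
        · intro t ht
          simp only [Finset.mem_insert, Finset.mem_singleton] at ht ⊢
          rcases ht with rfl | rfl
          · exact h1
          · exact h2
        · rw [Finset.card_pair (hAB l), Finset.card_pair (hAB k)]
      · exfalso
        push_neg at h2
        have hb0 : v l (B k) = 0 := hvz l _ h2.1 h2.2
        have he := hip k l hkl
        rw [hb0, mul_zero, add_zero] at he
        have h1' : v l (A k) = 1 ∨ v l (A k) = -1 := by
          rcases h1 with h | h
          · rw [h]; exact hvA l
          · rw [h]; exact hvB l
        rcases hvA k with h' | h' <;> rcases h1' with h'' | h'' <;>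
          rw [h', h''] at he <;> omega
    · by_cases h2 : B k = A l ∨ B k = B l
      · exfalso
        push_neg at h1
        have ha0 : v l (A k) = 0 := hvz l _ h1.1 h1.2
        have he := hip k l hkl
        rw [ha0, mul_zero, zero_add] at he
        have h2' : v l (B k) = 1 ∨ v l (B k) = -1 := by
          rcases h2 with h | h
          · rw [h]; exact hvA l
          · rw [h]; exact hvB l
        rcases hvB k with h' | h' <;> rcases h2' with h'' | h'' <;>
          rw [h', h''] at he <;> omega
      · right
        push_neg at h1; push_neg at h2
        rw [Finset.disjoint_left]
        intro t ht
        simp only [Finset.mem_insert, Finset.mem_singleton] at ht ⊢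
        push_neg
        rcases ht with rfl | rfl
        · exact h1
        · exact h2
  -- if support of k' equals {C, D} then v k' vanishes off C, D and is ±1 on C, D
  have hmem2 : ∀ (k' : Fin (m+3)) (C D : Fin (2*m)),
      ({A k', B k'} : Finset (Fin (2*m))) = {C, D} →
      (A k' = C ∨ A k' = D) ∧ (B k' = C ∨ B k' = D) := by
    intro k' C D heq
    constructor
    · have h : A k' ∈ ({C, D} : Finset (Fin (2*m))) := by rw [← heq]; simp
      simpa using h
    · have h : B k' ∈ ({C, D} : Finset (Fin (2*m))) := by rw [← heq]; simp
      simpa using h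
  have hvz' : ∀ (k' : Fin (m+3)) (C D : Fin (2*m)),
      ({A k', B k'} : Finset (Fin (2*m))) = {C, D} →
      ∀ t, t ≠ C → t ≠ D → v k' t = 0 := by
    intro k' C D heq t htC htD
    obtain ⟨h1, h2⟩ := hmem2 k' C D heq
    apply hvz k' t
    · rcases h1 with h | h
      · exact fun hh => htC (hh.trans h)
      · exact fun hh => htD (hh.trans h)
    · rcases h2 with h | h
      · exact fun hh => htC (hh.trans h)
      · exact fun hh => htD (hh.trans h)
  have hpm : ∀ (k' : Fin (m+3)) (C D : Fin (2*m)),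
      ({A k', B k'} : Finset (Fin (2*m))) = {C, D} →
      (v k' C = 1 ∨ v k' C = -1) ∧ (v k' D = 1 ∨ v k' D = -1) := by
    intro k' C D heq
    constructor
    · have h : C ∈ ({A k', B k'} : Finset (Fin (2*m))) := by rw [heq]; simp
      simp only [Finset.mem_insert, Finset.mem_singleton] at h
      rcases h with rfl | rfl
      · exact hvA k'
      · exact hvB k'
    · have h : D ∈ ({A k', B k'} : Finset (Fin (2*m))) := by rw [heq]; simp
      simp only [Finset.mem_insert, Finset.mem_singleton] at h
      rcases h with rfl | rfl
      · exact hvA k'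
      · exact hvB k'
  -- pigeonhole
  set f : Fin (m+3) → Finset (Fin (2*m)) := fun k => {A k, B k} with hf
  have hfiber2 : ∀ k l r : Fin (m+3), k ≠ l → k ≠ r → l ≠ r →
      f k = f l → f k = f r → False := by
    intro k l r hkl hkr hlr hekl hekr
    obtain ⟨hpl, hql⟩ := hpm l (A k) (B k) hekl.symm
    obtain ⟨hpr, hqr⟩ := hpm r (A k) (B k) hekr.symm
    have hlr' : ∑ i, v l i * v r i = 0 := horth l r hlr
    rw [aux_sum_support (v l) (v r) (A k) (B k) (hAB k)
      (hvz' l (A k) (B k) hekl.symm)] at hlr'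
    exact aux_sign6 _ _ _ _ _ _ (hvA k) (hvB k) hpl hql hpr hqr
      (hip k l hkl) (hip k r hkr) hlr'
  set T := Finset.univ.image f with hT
  have hTcard2 : ∀ t ∈ T, t.card = 2 := by
    intro t ht
    simp only [hT, Finset.mem_image, Finset.mem_univ, true_and] at ht
    obtain ⟨k, rfl⟩ := ht
    exact Finset.card_pair (hAB k)
  have hTdisj : ∀ t1 ∈ T, ∀ t2 ∈ T, t1 ≠ t2 → Disjoint t1 t2 := by
    intro t1 ht1 t2 ht2 hne
    simp only [hT, Finset.mem_image, Finset.mem_univ, true_and] at ht1 ht2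
    obtain ⟨k, rfl⟩ := ht1; obtain ⟨l, rfl⟩ := ht2
    have hkl : k ≠ l := by rintro rfl; exact hne rfl
    rcases hsup k l hkl with h | h
    · exact absurd h hne
    · exact h
  have hTcard : T.card ≤ m := by
    have h1 : (T.biUnion id).card = ∑ t ∈ T, t.card :=
      Finset.card_biUnion (fun x hx y hy h => hTdisj x hx y hy h)
    have h2 : ∑ t ∈ T, t.card = T.card * 2 := Finset.sum_const_nat hTcard2
    have h3 : (T.biUnion id).card ≤ 2 * m := by
      have := Finset.card_le_univ (T.biUnion id)
      simpa using this
    omega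
  have hfibcard : ∀ t : Finset (Fin (2*m)),
      (Finset.univ.filter (fun k => f k = t)).card ≤ 2 := by
    intro t
    by_contra h
    push_neg at h
    rw [Finset.two_lt_card_iff] at h
    obtain ⟨k, l, r, hk, hl, hr, hkl, hkr, hlr⟩ := h
    simp only [Finset.mem_filter, Finset.mem_univ, true_and] at hk hl hr
    exact hfiber2 k l r hkl hkr hlr (by rw [hk, hl]) (by rw [hk, hr])
  have hsumfib : ∑ t ∈ T, (Finset.univ.filter (fun k => f k = t)).card = m + 3 := by
    rw [← Finset.card_eq_sum_card_fiberwise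
      (fun k _ => Finset.mem_image_of_mem f (Finset.mem_univ k))]
    simp
  set T2 := T.filter (fun t => (Finset.univ.filter (fun k => f k = t)).card = 2) with hT2
  have hT2card : 2 < T2.card := by
    have hsplit : T2.card + (T.filter
        (fun t => ¬ (Finset.univ.filter (fun k => f k = t)).card = 2)).card = T.card := by
      rw [hT2]
      exact Finset.card_filter_add_card_filter_not _
    have h2a : ∑ t ∈ T2, (Finset.univ.filter (fun k => f k = t)).card = T2.card * 2 :=
      Finset.sum_const_nat (by
        intro t ht
        rw [hT2, Finset.mem_filter] at ht
        exact ht.2)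
    have h2b : ∑ t ∈ T.filter
        (fun t => ¬ (Finset.univ.filter (fun k => f k = t)).card = 2),
        (Finset.univ.filter (fun k => f k = t)).card ≤ (T.filter
        (fun t => ¬ (Finset.univ.filter (fun k => f k = t)).card = 2)).card * 1 := by
      apply Finset.sum_le_card_nsmul
      intro t ht
      rw [Finset.mem_filter] at ht
      have := hfibcard t
      omega
    have hcomb : ∑ t ∈ T, (Finset.univ.filter (fun k => f k = t)).card =
        ∑ t ∈ T2, (Finset.univ.filter (fun k => f k = t)).card +
        ∑ t ∈ T.filter
        (fun t => ¬ (Finset.univ.filter (fun k => f k = t)).card = 2),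
        (Finset.univ.filter (fun k => f k = t)).card := by
      rw [hT2]
      exact (Finset.sum_filter_add_sum_filter_not _ _ _).symm
    omega
  rw [Finset.two_lt_card_iff] at hT2card
  obtain ⟨t1, t2, t3, ht1, ht2, ht3, h12, h13, h23⟩ := hT2card
  -- unpack doubled supports
  have hpack : ∀ t ∈ T2, ∃ C D : Fin (2*m), C ≠ D ∧ t = {C, D} ∧
      ((2:ℤ) • (Pi.single C 1 : Fin (2*m) → ℤ)) ∈ M ∧ (∀ r, Even (v r C + v r D)) := by
    intro t ht
    rw [hT2, Finset.mem_filter] at ht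
    obtain ⟨htT, hfib⟩ := ht
    rw [Finset.card_eq_two] at hfib
    obtain ⟨k, l, hkl, hflt⟩ := hfib
    have hk : f k = t := by
      have : k ∈ Finset.univ.filter (fun k' => f k' = t) := by rw [hflt]; simp
      simpa using this
    have hl : f l = t := by
      have : l ∈ Finset.univ.filter (fun k' => f k' = t) := by rw [hflt]; simp
      simpa using this
    have heql : ({A l, B l} : Finset (Fin (2*m))) = {A k, B k} := hl.trans hk.symm
    obtain ⟨hγ, hδ⟩ := hpm l (A k) (B k) heql
    refine ⟨A k, B k, hAB k, hk.symm, ?_, ?_⟩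
    · have key : (v k (A k)) • v k + (v l (A k)) • v l =
          (2:ℤ) • (Pi.single (A k) 1 : Fin (2*m) → ℤ) := by
        funext t'
        simp only [Pi.add_apply, Pi.smul_apply, smul_eq_mul, Pi.single_apply]
        by_cases h1 : t' = A k
        · subst h1
          norm_num
          exact aux_sq2 _ _ (hvA k) hγ
        · by_cases h2 : t' = B k
          · subst h2
            rw [if_neg h1, mul_zero]
            exact aux_sign4 _ _ _ _ (hvA k) (hvB k) hγ hδ (hip k l hkl)
          · rw [hvz k t' h1 h2, hvz' l (A k) (B k) heql t' h1 h2, if_neg h1]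
            ring
      rw [← key]
      exact M.add_mem (M.zsmul_mem (hvM k) _) (M.zsmul_mem (hvM l) _)
    · intro r
      by_cases hrk : r = k
      · subst hrk
        exact aux_even _ _ (hvA r) (hvB r)
      · rcases hsup r k hrk with h | h
        · obtain ⟨hc, hd⟩ := hpm r (A k) (B k) h
          exact aux_even _ _ hc hd
        · have hA : v r (A k) = 0 := by
            have hmem : A k ∉ ({A r, B r} : Finset (Fin (2*m))) :=
              Finset.disjoint_right.mp h (by simp)
            simp only [Finset.mem_insert, Finset.mem_singleton] at hmem
            push_neg at hmem
            exact hvz r _ hmem.1 hmem.2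
          have hB : v r (B k) = 0 := by
            have hmem : B k ∉ ({A r, B r} : Finset (Fin (2*m))) :=
              Finset.disjoint_right.mp h (by simp)
            simp only [Finset.mem_insert, Finset.mem_singleton] at hmem
            push_neg at hmem
            exact hvz r _ hmem.1 hmem.2
          rw [hA, hB]
          exact Even.zero
  clear hfibcard hsumfib hTcard hfiber2 hip hsup hmem2 hvz' hpm
  obtain ⟨C1, D1, hCD1, ht1eq, h2e1, hev1⟩ := hpack t1 ht1
  obtain ⟨C2, D2, hCD2, ht2eq, h2e2, hev2⟩ := hpack t2 ht2
  obtain ⟨C3, D3, hCD3, ht3eq, h2e3, hev3⟩ := hpack t3 ht3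
  have hT2T : T2 ⊆ T := Finset.filter_subset _ _
  have hcross : ∀ (s1 s2 : Finset (Fin (2*m))), s1 ∈ T2 → s2 ∈ T2 → s1 ≠ s2 →
      ∀ (x y : Fin (2*m)), x ∈ s1 → y ∈ s2 → x ≠ y := by
    intro s1 s2 hs1 hs2 hne x y hx hy
    have hd := hTdisj s1 (hT2T hs1) s2 (hT2T hs2) hne
    exact fun hxy => (Finset.disjoint_left.mp hd hx) (hxy ▸ hy)
  have hC1C2 : C1 ≠ C2 := hcross t1 t2 ht1 ht2 h12 _ _ (by rw [ht1eq]; simp) (by rw [ht2eq]; simp)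
  have hC1D2 : C1 ≠ D2 := hcross t1 t2 ht1 ht2 h12 _ _ (by rw [ht1eq]; simp) (by rw [ht2eq]; simp)
  have hD1C2 : D1 ≠ C2 := hcross t1 t2 ht1 ht2 h12 _ _ (by rw [ht1eq]; simp) (by rw [ht2eq]; simp)
  have hD1D2 : D1 ≠ D2 := hcross t1 t2 ht1 ht2 h12 _ _ (by rw [ht1eq]; simp) (by rw [ht2eq]; simp)
  have hC1C3 : C1 ≠ C3 := hcross t1 t3 ht1 ht3 h13 _ _ (by rw [ht1eq]; simp) (by rw [ht3eq]; simp)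
  have hC1D3 : C1 ≠ D3 := hcross t1 t3 ht1 ht3 h13 _ _ (by rw [ht1eq]; simp) (by rw [ht3eq]; simp)
  have hD1C3 : D1 ≠ C3 := hcross t1 t3 ht1 ht3 h13 _ _ (by rw [ht1eq]; simp) (by rw [ht3eq]; simp)
  have hD1D3 : D1 ≠ D3 := hcross t1 t3 ht1 ht3 h13 _ _ (by rw [ht1eq]; simp) (by rw [ht3eq]; simp)
  have hC2C3 : C2 ≠ C3 := hcross t2 t3 ht2 ht3 h23 _ _ (by rw [ht2eq]; simp) (by rw [ht3eq]; simp)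
  have hC2D3 : C2 ≠ D3 := hcross t2 t3 ht2 ht3 h23 _ _ (by rw [ht2eq]; simp) (by rw [ht3eq]; simp)
  have hD2C3 : D2 ≠ C3 := hcross t2 t3 ht2 ht3 h23 _ _ (by rw [ht2eq]; simp) (by rw [ht3eq]; simp)
  have hD2D3 : D2 ≠ D3 := hcross t2 t3 ht2 ht3 h23 _ _ (by rw [ht2eq]; simp) (by rw [ht3eq]; simp)
  -- parity homomorphisms
  obtain ⟨φ1, hφ1⟩ := aux_phi (n := 2*m) C1 D1
  obtain ⟨φ2, hφ2⟩ := aux_phi (n := 2*m) C2 D2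
  have hMker : ∀ (φ : (Fin (2*m) → ℤ) →+ ZMod 2) (C D : Fin (2*m)),
      (∀ x, φ x = ((x C + x D : ℤ) : ZMod 2)) → (∀ r, Even (v r C + v r D)) →
      ∀ x ∈ M, φ x = 0 := by
    intro φ C D hφ hev x hx
    have hle : AddSubgroup.closure (Set.range v) ≤ φ.ker := by
      rw [AddSubgroup.closure_le]
      rintro _ ⟨r, rfl⟩
      rw [SetLike.mem_coe, AddMonoidHom.mem_ker, hφ]
      rw [ZMod.intCast_zmod_eq_zero_iff_dvd]
      exact_mod_cast (hev r).two_dvd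
    exact hle hx
  have hker1 : ∀ x ∈ M, φ1 x = 0 := hMker φ1 C1 D1 hφ1 hev1
  have hker2 : ∀ x ∈ M, φ2 x = 0 := hMker φ2 C2 D2 hφ2 hev2
  -- the three roots in the primitive closure
  have hwP : ∀ C C' : Fin (2*m), C ≠ C' →
      ((2:ℤ) • (Pi.single C 1 : Fin (2*m) → ℤ)) ∈ M →
      ((2:ℤ) • (Pi.single C' 1 : Fin (2*m) → ℤ)) ∈ M →
      (Pi.single C 1 + Pi.single C' 1 : Fin (2*m) → ℤ) ∈ primClosure (2*m) M ∧
      (Pi.single C 1 + Pi.single C' 1 : Fin (2*m) → ℤ) ∈ DLat (2*m) ∧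
      (∑ i, (Pi.single C 1 + Pi.single C' 1 : Fin (2*m) → ℤ) i *
        (Pi.single C 1 + Pi.single C' 1 : Fin (2*m) → ℤ) i = 2) := by
    intro C C' hne h2C h2C'
    have hDmem : (Pi.single C 1 + Pi.single C' 1 : Fin (2*m) → ℤ) ∈ DLat (2*m) := by
      show Even (∑ i, (Pi.single C 1 + Pi.single C' 1 : Fin (2*m) → ℤ) i)
      have hs : ∑ i, (Pi.single C 1 + Pi.single C' 1 : Fin (2*m) → ℤ) i = 2 := by
        simp [Finset.sum_add_distrib, Finset.sum_pi_single']
      rw [hs]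
      exact ⟨1, rfl⟩
    have hval : ∀ t, t ≠ C → t ≠ C' →
        (Pi.single C 1 + Pi.single C' 1 : Fin (2*m) → ℤ) t = 0 := by
      intro t h1 h2
      simp [Pi.single_apply, h1, h2]
    have hnorm : ∑ i, (Pi.single C 1 + Pi.single C' 1 : Fin (2*m) → ℤ) i *
        (Pi.single C 1 + Pi.single C' 1 : Fin (2*m) → ℤ) i = 2 := by
      rw [aux_sum_support _ _ C C' hne hval]
      simp [Pi.single_apply, hne, Ne.symm hne]
    refine ⟨⟨hDmem, 2, two_ne_zero, ?_⟩, hDmem, hnorm⟩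
    rw [smul_add]
    exact M.add_mem h2C h2C'
  obtain ⟨hPab, hDab, hNab⟩ := hwP C1 C2 hC1C2 h2e1 h2e2
  obtain ⟨hPac, hDac, hNac⟩ := hwP C1 C3 hC1C3 h2e1 h2e3
  obtain ⟨hPbc, hDbc, hNbc⟩ := hwP C2 C3 hC2C3 h2e2 h2e3
  -- φ values
  have hφ1ab : φ1 (Pi.single C1 1 + Pi.single C2 1 : Fin (2*m) → ℤ) = 1 := by
    rw [hφ1]; simp [Pi.single_apply, hCD1.symm, hC1C2, hD1C2]
  have hφ1ac : φ1 (Pi.single C1 1 + Pi.single C3 1 : Fin (2*m) → ℤ) = 1 := by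
    rw [hφ1]; simp [Pi.single_apply, hCD1.symm, hC1C3, hD1C3]
  have hφ1bc : φ1 (Pi.single C2 1 + Pi.single C3 1 : Fin (2*m) → ℤ) = 0 := by
    rw [hφ1]; simp [Pi.single_apply, hC1C2, hC1C3, hD1C2, hD1C3]
  have hφ2ab : φ2 (Pi.single C1 1 + Pi.single C2 1 : Fin (2*m) → ℤ) = 1 := by
    rw [hφ2]; simp [Pi.single_apply, hC1C2.symm, hCD2.symm, hC1D2.symm, hD2C3]
  have hφ2ac : φ2 (Pi.single C1 1 + Pi.single C3 1 : Fin (2*m) → ℤ) = 0 := by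
    rw [hφ2]; simp [Pi.single_apply, hC1C2.symm, hC2C3, hC1D2.symm, hD2C3]
  have hφ2bc : φ2 (Pi.single C2 1 + Pi.single C3 1 : Fin (2*m) → ℤ) = 1 := by
    rw [hφ2]; simp [Pi.single_apply, hC2C3, hCD2.symm, hD2C3]
  -- quotient elements
  set P := primClosure (2*m) M with hPdef
  set N := M.addSubgroupOf P with hNdef
  set qa : P ⧸ N := QuotientAddGroup.mk ⟨_, hPab⟩ with hqa
  set qb : P ⧸ N := QuotientAddGroup.mk ⟨_, hPac⟩ with hqb
  set qc : P ⧸ N := QuotientAddGroup.mk ⟨_, hPbc⟩ with hqc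
  have raa : qa + qa = 0 := by
    rw [hqa, ← QuotientAddGroup.mk_add, QuotientAddGroup.eq_zero_iff, hNdef,
      AddSubgroup.mem_addSubgroupOf]
    show (Pi.single C1 1 + Pi.single C2 1 : Fin (2*m) → ℤ) +
      (Pi.single C1 1 + Pi.single C2 1) ∈ M
    have he : (Pi.single C1 1 + Pi.single C2 1 : Fin (2*m) → ℤ) +
        (Pi.single C1 1 + Pi.single C2 1)
        = (2:ℤ) • Pi.single C1 1 + (2:ℤ) • Pi.single C2 1 := by
      rw [two_smul, two_smul]; abel
    rw [he]
    exact M.add_mem h2e1 h2e2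
  have rbb : qb + qb = 0 := by
    rw [hqb, ← QuotientAddGroup.mk_add, QuotientAddGroup.eq_zero_iff, hNdef,
      AddSubgroup.mem_addSubgroupOf]
    show (Pi.single C1 1 + Pi.single C3 1 : Fin (2*m) → ℤ) +
      (Pi.single C1 1 + Pi.single C3 1) ∈ M
    have he : (Pi.single C1 1 + Pi.single C3 1 : Fin (2*m) → ℤ) +
        (Pi.single C1 1 + Pi.single C3 1)
        = (2:ℤ) • Pi.single C1 1 + (2:ℤ) • Pi.single C3 1 := by
      rw [two_smul, two_smul]; abel
    rw [he]
    exact M.add_mem h2e1 h2e3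
  have rab : qa + qb = qc := by
    rw [hqa, hqb, hqc, ← QuotientAddGroup.mk_add, QuotientAddGroup.eq, hNdef,
      AddSubgroup.mem_addSubgroupOf]
    show -((Pi.single C1 1 + Pi.single C2 1 : Fin (2*m) → ℤ) +
      (Pi.single C1 1 + Pi.single C3 1)) + (Pi.single C2 1 + Pi.single C3 1) ∈ M
    have he : -((Pi.single C1 1 + Pi.single C2 1 : Fin (2*m) → ℤ) +
        (Pi.single C1 1 + Pi.single C3 1)) + (Pi.single C2 1 + Pi.single C3 1)
        = -((2:ℤ) • Pi.single C1 1) := by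
      rw [two_smul]; abel
    rw [he]
    exact M.neg_mem h2e1
  have h0a : qa ≠ 0 := by
    rw [hqa]
    intro h
    rw [QuotientAddGroup.eq_zero_iff, hNdef, AddSubgroup.mem_addSubgroupOf] at h
    have h' : (Pi.single C1 1 + Pi.single C2 1 : Fin (2*m) → ℤ) ∈ M := h
    have := hker1 _ h'
    rw [hφ1ab] at this
    exact one_ne_zero this
  have h0b : qb ≠ 0 := by
    rw [hqb]
    intro h
    rw [QuotientAddGroup.eq_zero_iff, hNdef, AddSubgroup.mem_addSubgroupOf] at h
    have h' : (Pi.single C1 1 + Pi.single C3 1 : Fin (2*m) → ℤ) ∈ M := h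
    have := hker1 _ h'
    rw [hφ1ac] at this
    exact one_ne_zero this
  have h0c : qc ≠ 0 := by
    rw [hqc]
    intro h
    rw [QuotientAddGroup.eq_zero_iff, hNdef, AddSubgroup.mem_addSubgroupOf] at h
    have h' : (Pi.single C2 1 + Pi.single C3 1 : Fin (2*m) → ℤ) ∈ M := h
    have := hker2 _ h'
    rw [hφ2bc] at this
    exact one_ne_zero this
  have hab : qa ≠ qb := by
    rw [hqa, hqb]
    intro h
    rw [QuotientAddGroup.eq, hNdef, AddSubgroup.mem_addSubgroupOf] at h
    have h' : -(Pi.single C1 1 + Pi.single C2 1 : Fin (2*m) → ℤ) +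
        (Pi.single C1 1 + Pi.single C3 1) ∈ M := h
    have hz := hker2 _ h'
    rw [map_add, map_neg, hφ2ab, hφ2ac] at hz
    rw [add_zero] at hz
    exact one_ne_zero (neg_eq_zero.mp hz)
  have hac : qa ≠ qc := by
    rw [hqa, hqc]
    intro h
    rw [QuotientAddGroup.eq, hNdef, AddSubgroup.mem_addSubgroupOf] at h
    have h' : -(Pi.single C1 1 + Pi.single C2 1 : Fin (2*m) → ℤ) +
        (Pi.single C2 1 + Pi.single C3 1) ∈ M := h
    have hz := hker1 _ h'
    rw [map_add, map_neg, hφ1ab, hφ1bc] at hz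
    rw [add_zero] at hz
    exact one_ne_zero (neg_eq_zero.mp hz)
  have hbc : qb ≠ qc := by
    rw [hqb, hqc]
    intro h
    rw [QuotientAddGroup.eq, hNdef, AddSubgroup.mem_addSubgroupOf] at h
    have h' : -(Pi.single C1 1 + Pi.single C3 1 : Fin (2*m) → ℤ) +
        (Pi.single C2 1 + Pi.single C3 1) ∈ M := h
    have hz := hker1 _ h'
    rw [map_add, map_neg, hφ1ac, hφ1bc] at hz
    rw [add_zero] at hz
    exact one_ne_zero (neg_eq_zero.mp hz)
  obtain ⟨H, hHcar, hHcard⟩ := aux_klein qa qb qc raa rbb rab h0a h0b h0c hab hac hbc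
  refine ⟨H, hHcard, ?_⟩
  intro h hH hne0
  have hmem : h ∈ ({0, qa, qb, qc} : Set (↥P ⧸ N)) := by rw [← hHcar]; exact hH
  simp only [Set.mem_insert_iff, Set.mem_singleton_iff] at hmem
  rcases hmem with rfl | rfl | rfl | rfl
  · exact absurd rfl hne0
  · exact ⟨_, hPab, hDab, hNab, hqa.symm⟩
  · exact ⟨_, hPac, hDac, hNac, hqb.symm⟩
  · exact ⟨_, hPbc, hDbc, hNbc, hqc.symm⟩
end

section
/- There is no family 𝓗 of 6-element subsets of a 13-element set X such that (a) every 2-element subset of X is contained in at least one member of 𝓗, and (b) any two distinct members of 𝓗 intersect in at most 2 elements. (This is the combinatorial census underlying the proof that a non-supersingular normal quartic surface cannot have 13 nodes: the non-reduced planes would form such a family.) -/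
open Finset

/-- There is no family `𝓗` of 6-element subsets of a 13-element set `X` such that (a) every
2-element subset of `X` is contained in at least one member of `𝓗`, and (b) any two distinct
members of `𝓗` intersect in at most 2 elements.  (This is the combinatorial census underlying
the proof that a non-supersingular normal quartic surface cannot have 13 nodes: the
non-reduced planes would form such a family.) -/
theorem no_thirteen_nodes_census :
    ¬ ∃ ℋ : Finset (Finset (Fin 13)),
      (∀ A ∈ ℋ, A.card = 6) ∧
      (∀ p : Finset (Fin 13), p.card = 2 → ∃ A ∈ ℋ, p ⊆ A) ∧
      (∀ A ∈ ℋ, ∀ B ∈ ℋ, A ≠ B → (A ∩ B).card ≤ 2) := by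
  rintro ⟨ℋ, hcard, hcover, hint⟩
  set n := ℋ.card with hn
  -- r x = number of members containing x
  set r : Fin 13 → ℕ := fun x => (ℋ.filter (fun A => x ∈ A)).card with hr
  have hr_ite : ∀ x, r x = ∑ A ∈ ℋ, if x ∈ A then 1 else 0 := by
    intro x; rw [hr]; exact Finset.card_filter _ _
  -- Step 1: 78 ≤ 15 n
  have h1 : 78 ≤ 15 * n := by
    have hsub : (Finset.univ.powersetCard 2 : Finset (Finset (Fin 13))) ⊆
        ℋ.biUnion (fun A => A.powersetCard 2) := by
      intro p hp
      rw [Finset.mem_powersetCard] at hp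
      obtain ⟨A, hA, hpA⟩ := hcover p hp.2
      exact Finset.mem_biUnion.2 ⟨A, hA, Finset.mem_powersetCard.2 ⟨hpA, hp.2⟩⟩
    have h78 : (Finset.univ.powersetCard 2 : Finset (Finset (Fin 13))).card = 78 := by
      rw [Finset.card_powersetCard, Finset.card_univ, Fintype.card_fin]; decide
    calc 78 = (Finset.univ.powersetCard 2 : Finset (Finset (Fin 13))).card := h78.symm
      _ ≤ (ℋ.biUnion (fun A => A.powersetCard 2)).card := Finset.card_le_card hsub
      _ ≤ ∑ A ∈ ℋ, (A.powersetCard 2).card := Finset.card_biUnion_le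
      _ = ∑ A ∈ ℋ, 15 := by
          apply Finset.sum_congr rfl
          intro A hA
          rw [Finset.card_powersetCard, hcard A hA]; decide
      _ = 15 * n := by rw [Finset.sum_const, hn]; ring
  -- Step 2: ∑ r = 6n
  have h2 : ∑ x : Fin 13, r x = 6 * n := by
    calc ∑ x : Fin 13, r x = ∑ x : Fin 13, ∑ A ∈ ℋ, if x ∈ A then 1 else 0 := by
          simp_rw [hr_ite]
      _ = ∑ A ∈ ℋ, ∑ x : Fin 13, if x ∈ A then 1 else 0 := Finset.sum_comm
      _ = ∑ A ∈ ℋ, A.card := by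
          apply Finset.sum_congr rfl
          intro A _
          simp [← Finset.card_filter, Finset.filter_mem_eq_inter]
      _ = ∑ A ∈ ℋ, 6 := Finset.sum_congr rfl hcard
      _ = 6 * n := by rw [Finset.sum_const, hn]; ring
  -- Step 3: ∑ r² ≤ 6n + 2n(n-1)
  have h3 : ∑ x : Fin 13, (r x) ^ 2 ≤ 6 * n + 2 * (n * (n - 1)) := by
    have key : ∑ x : Fin 13, (r x) ^ 2 = ∑ A ∈ ℋ, ∑ B ∈ ℋ, (A ∩ B).card := by
      calc ∑ x : Fin 13, (r x) ^ 2
          = ∑ x : Fin 13, ∑ A ∈ ℋ, ∑ B ∈ ℋ,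
              ((if x ∈ A then 1 else 0) * (if x ∈ B then 1 else 0)) := by
            apply Finset.sum_congr rfl
            intro x _
            rw [sq, hr_ite, Finset.sum_mul_sum]
        _ = ∑ A ∈ ℋ, ∑ B ∈ ℋ, ∑ x : Fin 13,
              ((if x ∈ A then 1 else 0) * (if x ∈ B then 1 else 0)) := by
            rw [Finset.sum_comm]
            apply Finset.sum_congr rfl
            intro A _
            rw [Finset.sum_comm]
        _ = ∑ A ∈ ℋ, ∑ B ∈ ℋ, (A ∩ B).card := by
            apply Finset.sum_congr rfl; intro A _
            apply Finset.sum_congr rfl; intro B _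
            have hAB : A ∩ B = Finset.univ.filter (fun x => x ∈ A ∧ x ∈ B) := by
              ext x; simp
            rw [hAB, Finset.card_filter]
            apply Finset.sum_congr rfl
            intro x _
            by_cases h1 : x ∈ A <;> by_cases h2 : x ∈ B <;> simp [h1, h2]
    rw [key]
    have hbd : ∀ A ∈ ℋ, ∑ B ∈ ℋ, (A ∩ B).card ≤ 6 + 2 * (n - 1) := by
      intro A hA
      rw [← Finset.add_sum_erase ℋ _ hA]
      have hAA : (A ∩ A).card = 6 := by rw [Finset.inter_self]; exact hcard A hA
      have hrest : ∑ B ∈ ℋ.erase A, (A ∩ B).card ≤ 2 * (n - 1) := by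
        calc ∑ B ∈ ℋ.erase A, (A ∩ B).card ≤ ∑ B ∈ ℋ.erase A, 2 := by
              apply Finset.sum_le_sum
              intro B hB
              exact hint A hA B (Finset.mem_of_mem_erase hB)
                (Ne.symm (Finset.ne_of_mem_erase hB))
          _ = 2 * (n - 1) := by rw [Finset.sum_const, Finset.card_erase_of_mem hA, hn]; ring
      omega
    calc ∑ A ∈ ℋ, ∑ B ∈ ℋ, (A ∩ B).card ≤ ∑ A ∈ ℋ, (6 + 2 * (n - 1)) :=
          Finset.sum_le_sum hbd
      _ = n * (6 + 2 * (n - 1)) := by rw [Finset.sum_const, hn]; ring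
      _ ≤ 6 * n + 2 * (n * (n - 1)) := by ring_nf; omega
  -- Step 4: Cauchy–Schwarz and conclusion
  have hcs : (∑ x : Fin 13, r x) ^ 2 ≤ 13 * ∑ x : Fin 13, (r x) ^ 2 := by
    have := sq_sum_le_card_mul_sum_sq (s := (Finset.univ : Finset (Fin 13))) (f := r)
    simpa using this
  rw [h2] at hcs
  have hn6 : 6 ≤ n := by omega
  nlinarith [hcs, h3, hn6, Nat.sub_add_cancel (by omega : 1 ≤ n)]
end
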